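/- Fix a, b, c ∈ ℝ and define Ψ on the open set {(q',p',τ',π') ∈ ℝ⁴ : p' ≠ 0 and τ' + b ≠ c} by Ψ(q',p',τ',π') = (q̃, p̃, τ̃, π̃) with q̃ = q' + a p'^{−2} (τ'+b−c)^{−1}, p̃ = p', τ̃ = τ' + b, π̃ = π' − a p'^{−1} (τ'+b−c)^{−2}. Then Ψ preserves the canonical symplectic form: at every point of the domain, the Fréchet derivative L of Ψ satisfies ω(L u, L w) = ω(u, w) for all u, w ∈ ℝ⁴. -/

import Mathlib

/-- Canonical symplectic bilinear form on ℝ⁴ with coordinates (q,p,τ,π),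
corresponding to dp∧dq + dπ∧dτ. -/
def ω4 (u w : ℝ × ℝ × ℝ × ℝ) : ℝ :=
  u.2.1 * w.1 - u.1 * w.2.1 + u.2.2.2 * w.2.2.1 - u.2.2.1 * w.2.2.2

/-- The transformation (trans) relating the ideal gas to the Clausius gas,
q̃ = q' + a p'^{−2}(τ'+b−c)^{−1}, p̃ = p', τ̃ = τ'+b,
π̃ = π' − a p'^{−1}(τ'+b−c)^{−2}, preserves the canonical symplectic form. -/
theorem stmt_14 (a b c : ℝ) (Ψ : ℝ × ℝ × ℝ × ℝ → ℝ × ℝ × ℝ × ℝ)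
    (hΨ : ∀ x : ℝ × ℝ × ℝ × ℝ,
      Ψ x = (x.1 + a / (x.2.1 ^ 2 * (x.2.2.1 + b - c)), x.2.1, x.2.2.1 + b,
             x.2.2.2 - a / (x.2.1 * (x.2.2.1 + b - c) ^ 2))) :
    ∀ x : ℝ × ℝ × ℝ × ℝ, x.2.1 ≠ 0 → x.2.2.1 + b ≠ c →
      ∀ u w : ℝ × ℝ × ℝ × ℝ, ω4 (fderiv ℝ Ψ x u) (fderiv ℝ Ψ x w) = ω4 u w := by
  have hΨeq : Ψ = fun x : ℝ × ℝ × ℝ × ℝ =>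
      (x.1 + a / (x.2.1 ^ 2 * (x.2.2.1 + b - c)), x.2.1, x.2.2.1 + b,
       x.2.2.2 - a / (x.2.1 * (x.2.2.1 + b - c) ^ 2)) := funext hΨ
  subst hΨeq
  intro x hp ht u w
  let P1 : (ℝ × ℝ × ℝ × ℝ) →L[ℝ] ℝ := ContinuousLinearMap.fst ℝ ℝ (ℝ × ℝ × ℝ)
  let S1 : (ℝ × ℝ × ℝ × ℝ) →L[ℝ] ℝ × ℝ × ℝ := ContinuousLinearMap.snd ℝ ℝ (ℝ × ℝ × ℝ)
  let P2 : (ℝ × ℝ × ℝ × ℝ) →L[ℝ] ℝ := (ContinuousLinearMap.fst ℝ ℝ (ℝ × ℝ)).comp S1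
  let S2 : (ℝ × ℝ × ℝ × ℝ) →L[ℝ] ℝ × ℝ := (ContinuousLinearMap.snd ℝ ℝ (ℝ × ℝ)).comp S1
  let P3 : (ℝ × ℝ × ℝ × ℝ) →L[ℝ] ℝ := (ContinuousLinearMap.fst ℝ ℝ ℝ).comp S2
  let P4 : (ℝ × ℝ × ℝ × ℝ) →L[ℝ] ℝ := (ContinuousLinearMap.snd ℝ ℝ ℝ).comp S2
  have h1 : HasFDerivAt (fun x : ℝ × ℝ × ℝ × ℝ => x.1) P1 x := P1.hasFDerivAt
  have h2 : HasFDerivAt (fun x : ℝ × ℝ × ℝ × ℝ => x.2.1) P2 x := P2.hasFDerivAt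
  have h3 : HasFDerivAt (fun x : ℝ × ℝ × ℝ × ℝ => x.2.2.1) P3 x := P3.hasFDerivAt
  have h4 : HasFDerivAt (fun x : ℝ × ℝ × ℝ × ℝ => x.2.2.2) P4 x := P4.hasFDerivAt
  have ht' : HasFDerivAt (fun x : ℝ × ℝ × ℝ × ℝ => x.2.2.1 + b - c) P3 x :=
    (h3.add_const b).sub_const c
  have htne : x.2.2.1 + b - c ≠ 0 := sub_ne_zero.mpr ht
  have hd1 : HasFDerivAt (fun x : ℝ × ℝ × ℝ × ℝ => x.2.1 ^ 2 * (x.2.2.1 + b - c))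
      ((x.2.1 * x.2.1) • P3 + (x.2.2.1 + b - c) • (x.2.1 • P2 + x.2.1 • P2)) x := by
    simp only [pow_two]
    exact (h2.mul h2).mul ht'
  have hd1ne : x.2.1 ^ 2 * (x.2.2.1 + b - c) ≠ 0 :=
    mul_ne_zero (pow_ne_zero 2 hp) htne
  have hd2 : HasFDerivAt (fun x : ℝ × ℝ × ℝ × ℝ => x.2.1 * (x.2.2.1 + b - c) ^ 2)
      (x.2.1 • ((x.2.2.1 + b - c) • P3 + (x.2.2.1 + b - c) • P3)
        + ((x.2.2.1 + b - c) * (x.2.2.1 + b - c)) • P2) x := by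
    simp only [pow_two]
    exact h2.mul (ht'.mul ht')
  have hd2ne : x.2.1 * (x.2.2.1 + b - c) ^ 2 ≠ 0 :=
    mul_ne_zero hp (pow_ne_zero 2 htne)
  have hinv1 : HasFDerivAt (fun x : ℝ × ℝ × ℝ × ℝ => (x.2.1 ^ 2 * (x.2.2.1 + b - c))⁻¹)
      ((ContinuousLinearMap.smulRight (1 : ℝ →L[ℝ] ℝ)
          (-((x.2.1 ^ 2 * (x.2.2.1 + b - c)) ^ 2)⁻¹)).comp
        ((x.2.1 * x.2.1) • P3 + (x.2.2.1 + b - c) • (x.2.1 • P2 + x.2.1 • P2))) x :=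
    (hasFDerivAt_inv hd1ne).comp x hd1
  have hinv2 : HasFDerivAt (fun x : ℝ × ℝ × ℝ × ℝ => (x.2.1 * (x.2.2.1 + b - c) ^ 2)⁻¹)
      ((ContinuousLinearMap.smulRight (1 : ℝ →L[ℝ] ℝ)
          (-((x.2.1 * (x.2.2.1 + b - c) ^ 2) ^ 2)⁻¹)).comp
        (x.2.1 • ((x.2.2.1 + b - c) • P3 + (x.2.2.1 + b - c) • P3)
          + ((x.2.2.1 + b - c) * (x.2.2.1 + b - c)) • P2)) x :=
    (hasFDerivAt_inv hd2ne).comp x hd2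
  have hc1 : HasFDerivAt (fun x : ℝ × ℝ × ℝ × ℝ => a / (x.2.1 ^ 2 * (x.2.2.1 + b - c)))
      (a • ((ContinuousLinearMap.smulRight (1 : ℝ →L[ℝ] ℝ)
          (-((x.2.1 ^ 2 * (x.2.2.1 + b - c)) ^ 2)⁻¹)).comp
        ((x.2.1 * x.2.1) • P3 + (x.2.2.1 + b - c) • (x.2.1 • P2 + x.2.1 • P2)))) x := by
    simp only [div_eq_mul_inv]
    exact hinv1.const_mul a
  have hc4 : HasFDerivAt (fun x : ℝ × ℝ × ℝ × ℝ => a / (x.2.1 * (x.2.2.1 + b - c) ^ 2))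
      (a • ((ContinuousLinearMap.smulRight (1 : ℝ →L[ℝ] ℝ)
          (-((x.2.1 * (x.2.2.1 + b - c) ^ 2) ^ 2)⁻¹)).comp
        (x.2.1 • ((x.2.2.1 + b - c) • P3 + (x.2.2.1 + b - c) • P3)
          + ((x.2.2.1 + b - c) * (x.2.2.1 + b - c)) • P2))) x := by
    simp only [div_eq_mul_inv]
    exact hinv2.const_mul a
  have H : HasFDerivAt (fun x : ℝ × ℝ × ℝ × ℝ =>
      (x.1 + a / (x.2.1 ^ 2 * (x.2.2.1 + b - c)), x.2.1, x.2.2.1 + b,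
       x.2.2.2 - a / (x.2.1 * (x.2.2.1 + b - c) ^ 2))) _ x :=
    HasFDerivAt.prodMk (h1.add hc1) (HasFDerivAt.prodMk h2 (HasFDerivAt.prodMk (h3.add_const b) (h4.sub hc4)))
  rw [H.fderiv]
  simp only [ω4, P1, P2, P3, P4, S1, S2, ContinuousLinearMap.prod_apply,
    ContinuousLinearMap.add_apply, ContinuousLinearMap.sub_apply,
    ContinuousLinearMap.smul_apply, ContinuousLinearMap.comp_apply,
    ContinuousLinearMap.coe_fst', ContinuousLinearMap.coe_snd',
    ContinuousLinearMap.smulRight_apply, ContinuousLinearMap.one_apply,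
    smul_eq_mul]
  field_simp
  ring
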